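/- If f : ℝ → ℝ is six times continuously differentiable at x, then the global smoothness indicator τ₅(Δx) = |IS₂(Δx) - IS₀(Δx)| satisfies τ₅(Δx) = |(13/3)f''(x)f'''(x) - f'(x)f⁽⁴⁾(x)|Δx⁵ + O(Δx⁶) as Δx → 0. -/

import Mathlib

open Filter Asymptotics Topology

private lemma contDiffAt_deriv' {f : ℝ → ℝ} {x : ℝ} {n : ℕ}
    (hf : ContDiffAt ℝ (n + 1 : ℕ) f x) : ContDiffAt ℝ n (deriv f) x := by
  have h1 : ContDiffAt ℝ n (fderiv ℝ f) x := hf.fderiv_right (by norm_cast)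
  have h2 : ContDiffAt ℝ n (fun y => fderiv ℝ f y 1) x := h1.clm_apply contDiffAt_const
  exact h2.congr_of_eventuallyEq (Filter.Eventually.of_forall fun y => fderiv_apply_one_eq_deriv.symm)

private lemma hasDerivAt_tpoly (a : ℕ → ℝ) (n : ℕ) (t : ℝ) :
    HasDerivAt (fun h : ℝ => ∑ j ∈ Finset.range (n + 1), a j * h ^ j / (j.factorial : ℝ))
      (∑ j ∈ Finset.range n, a (j + 1) * t ^ j / (j.factorial : ℝ)) t := by
  have h1 : HasDerivAt (fun h : ℝ => ∑ j ∈ Finset.range (n + 1), a j * h ^ j / (j.factorial : ℝ))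
      (∑ j ∈ Finset.range (n + 1), a j * ((j : ℝ) * t ^ (j - 1)) / (j.factorial : ℝ)) t := by
    apply HasDerivAt.fun_sum
    intro j _
    exact ((hasDerivAt_pow j t).const_mul (a j)).div_const _
  convert h1 using 1
  rw [Finset.sum_range_succ']
  simp only [Nat.cast_zero, zero_mul, mul_zero, zero_div, add_zero, Nat.add_sub_cancel,
    Nat.factorial_succ, Nat.cast_succ]
  refine Finset.sum_congr rfl fun j _ => ?_
  have hj : (j.factorial : ℝ) ≠ 0 := Nat.cast_ne_zero.2 j.factorial_pos.ne'
  push_cast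
  field_simp

private lemma taylor_peano : ∀ n : ℕ, ∀ g : ℝ → ℝ, ContDiffAt ℝ n g 0 →
    (fun h : ℝ => g h - ∑ j ∈ Finset.range n, iteratedDeriv j g 0 * h ^ j / (j.factorial : ℝ))
      =O[𝓝 (0:ℝ)] fun h => h ^ n := by
  intro n
  induction n with
  | zero =>
    intro g hg
    simpa using (hg.continuousAt : Filter.Tendsto g (𝓝 0) (𝓝 (g 0))).isBigO_one ℝ
  | succ n IH =>
    intro g hg
    have hg' : ContDiffAt ℝ n (deriv g) 0 := contDiffAt_deriv' hg
    obtain ⟨C, hCpos, hC⟩ := (IH (deriv g) hg').exists_pos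
    have hC' : ∀ᶠ t in 𝓝 (0:ℝ),
        ‖deriv g t - ∑ j ∈ Finset.range n, iteratedDeriv j (deriv g) 0 * t ^ j /
          (j.factorial : ℝ)‖ ≤ C * ‖t ^ n‖ := hC.bound
    have hdiff : ∀ᶠ y in 𝓝 (0:ℝ), DifferentiableAt ℝ g y := by
      have h1 : ∀ᶠ y in 𝓝 (0:ℝ), ContDiffAt ℝ (n + 1 : ℕ) g y := hg.eventually (by simp)
      filter_upwards [h1] with y hy
      exact hy.differentiableAt (by simp)
    rw [Metric.eventually_nhds_iff] at hC' hdiff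
    obtain ⟨ε₁, hε₁, hball₁⟩ := hC'
    obtain ⟨ε₂, hε₂, hball₂⟩ := hdiff
    rw [isBigO_iff]
    refine ⟨C, ?_⟩
    rw [Metric.eventually_nhds_iff]
    refine ⟨min ε₁ ε₂, lt_min hε₁ hε₂, fun h hh => ?_⟩
    have habs : |h| < min ε₁ ε₂ := by simpa [Real.dist_eq] using hh
    have hsub : ∀ t ∈ Set.uIcc (0:ℝ) h, |t| ≤ |h| := by
      intro t ht
      rw [Set.mem_uIcc] at ht
      rcases ht with ⟨h1, h2⟩ | ⟨h1, h2⟩ <;> rw [abs_le] <;> constructor <;>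
        linarith [le_abs_self h, neg_abs_le h, abs_nonneg h]
    set r : ℝ → ℝ := fun t => g t - ∑ j ∈ Finset.range (n + 1),
      iteratedDeriv j g 0 * t ^ j / (j.factorial : ℝ) with hrdef
    set r' : ℝ → ℝ := fun t => deriv g t - ∑ j ∈ Finset.range n,
      iteratedDeriv j (deriv g) 0 * t ^ j / (j.factorial : ℝ) with hr'def
    have hderiv : ∀ t ∈ Set.uIcc (0:ℝ) h, HasDerivWithinAt r (r' t) (Set.uIcc (0:ℝ) h) t := by
      intro t ht
      have hdt : DifferentiableAt ℝ g t := by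
        apply hball₂
        simp only [Real.dist_eq, sub_zero]
        exact lt_of_le_of_lt (hsub t ht) (habs.trans_le (min_le_right _ _))
      have h2 := hasDerivAt_tpoly (fun j => iteratedDeriv j g 0) n t
      have h3 : HasDerivAt r (r' t) t := by
        have h4 := hdt.hasDerivAt.sub h2
        have h5 : (∑ j ∈ Finset.range n, iteratedDeriv (j + 1) g 0 * t ^ j / (j.factorial : ℝ))
            = ∑ j ∈ Finset.range n, iteratedDeriv j (deriv g) 0 * t ^ j / (j.factorial : ℝ) := by
          refine Finset.sum_congr rfl fun j _ => ?_
          rw [iteratedDeriv_succ']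
        rw [hr'def]
        simp only [← h5]
        exact h4
      exact h3.hasDerivWithinAt
    have hbound : ∀ t ∈ Set.uIcc (0:ℝ) h, ‖r' t‖ ≤ C * |h| ^ n := by
      intro t ht
      have h1 : ‖r' t‖ ≤ C * ‖t ^ n‖ := by
        apply hball₁
        simp only [Real.dist_eq, sub_zero]
        exact lt_of_le_of_lt (hsub t ht) (habs.trans_le (min_le_left _ _))
      calc ‖r' t‖ ≤ C * ‖t ^ n‖ := h1
        _ ≤ C * |h| ^ n := by
            rw [Real.norm_eq_abs, abs_pow]
            exact mul_le_mul_of_nonneg_left (pow_le_pow_left₀ (abs_nonneg t) (hsub t ht) n)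
              hCpos.le
    have hmvt := Convex.norm_image_sub_le_of_norm_hasDerivWithin_le hderiv hbound (convex_uIcc _ _)
      (Set.left_mem_uIcc (a := (0:ℝ)) (b := h)) (Set.right_mem_uIcc (a := (0:ℝ)) (b := h))
    have hr0 : r 0 = 0 := by
      rw [hrdef]
      simp [Finset.sum_range_succ']
    calc ‖r h‖ = ‖r h - r 0‖ := by rw [hr0, sub_zero]
      _ ≤ C * |h| ^ n * ‖h - 0‖ := hmvt
      _ = C * ‖h ^ (n + 1)‖ := by
          rw [sub_zero, Real.norm_eq_abs, Real.norm_eq_abs, abs_pow]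
          ring

private noncomputable def wzP (f : ℝ → ℝ) (x : ℝ) (t : ℝ) : ℝ :=
  f x + deriv f x * t + iteratedDeriv 2 f x * t ^ 2 / 2 + iteratedDeriv 3 f x * t ^ 3 / 6
    + iteratedDeriv 4 f x * t ^ 4 / 24 + iteratedDeriv 5 f x * t ^ 5 / 120

/-- Taylor expansion of the WENO-Z global smoothness indicator τ₅ = |IS₂ - IS₀|:
    τ₅(Δx) = |(13/3)f''f''' - f'f⁽⁴⁾|Δx⁵ + O(Δx⁶) as Δx → 0⁺. -/
theorem tau5_taylor (f : ℝ → ℝ) (x : ℝ) (hf : ContDiffAt ℝ 6 f x) :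
    (fun Δ : ℝ =>
        |((13/12) * (f x - 2 * f (x + Δ) + f (x + 2*Δ))^2
            + (1/4) * (3 * f x - 4 * f (x + Δ) + f (x + 2*Δ))^2)
          - ((13/12) * (f (x - 2*Δ) - 2 * f (x - Δ) + f x)^2
            + (1/4) * (f (x - 2*Δ) - 4 * f (x - Δ) + 3 * f x)^2)|
        - |(13/3) * iteratedDeriv 2 f x * iteratedDeriv 3 f x
            - deriv f x * iteratedDeriv 4 f x| * Δ^5)
      =O[𝓝[>] (0:ℝ)] fun Δ : ℝ => Δ^6 := by
  -- Taylor remainder for f at x, order 6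
  have hgx : ContDiffAt ℝ 6 (fun h : ℝ => f (x + h)) 0 := by
    have h1 : ContDiffAt ℝ 6 (fun h : ℝ => x + h) 0 := (contDiff_const.add contDiff_id).contDiffAt
    have h2 : ContDiffAt ℝ 6 f ((fun h : ℝ => x + h) 0) := by simpa using hf
    exact h2.comp 0 h1
  have hpe := taylor_peano 6 (fun h : ℝ => f (x + h)) (by exact_mod_cast hgx)
  have hr : (fun h : ℝ => f (x + h) - wzP f x h) =O[𝓝 (0:ℝ)] fun h => h ^ 6 := by
    have hsum : ∀ h : ℝ, (∑ j ∈ Finset.range 6,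
        iteratedDeriv j (fun h : ℝ => f (x + h)) 0 * h ^ j / (j.factorial : ℝ)) = wzP f x h := by
      intro h
      have hit : ∀ j, iteratedDeriv j (fun h : ℝ => f (x + h)) 0 = iteratedDeriv j f x := by
        intro j; rw [iteratedDeriv_comp_const_add]; simp
      simp only [Finset.sum_range_succ, Finset.sum_range_zero, hit]
      norm_num [wzP, Nat.factorial, iteratedDeriv_one]
    have := hpe
    simp only [hsum] at this
    exact this
  -- remainder at x + k*Δ
  have hcomp : ∀ k : ℝ, (fun Δ : ℝ => f (x + k * Δ) - wzP f x (k * Δ))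
      =O[𝓝 (0:ℝ)] fun Δ => Δ ^ 6 := by
    intro k
    have ht : Filter.Tendsto (fun Δ : ℝ => k * Δ) (𝓝 0) (𝓝 0) := by
      have hc : Continuous fun Δ : ℝ => k * Δ := by fun_prop
      simpa using hc.tendsto 0
    have h1 : (fun Δ : ℝ => f (x + k * Δ) - wzP f x (k * Δ)) =O[𝓝 (0:ℝ)]
        fun Δ : ℝ => (k * Δ) ^ 6 := hr.comp_tendsto ht
    have h2 : (fun Δ : ℝ => (k * Δ) ^ 6) =O[𝓝 (0:ℝ)] fun Δ => Δ ^ 6 := by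
      simpa [mul_pow, mul_assoc] using
        (isBigO_refl (fun Δ : ℝ => Δ ^ 6) (𝓝 0)).const_mul_left (k ^ 6)
    exact h1.trans h2
  have h1d : (fun Δ : ℝ => f (x + Δ) - wzP f x Δ) =O[𝓝 (0:ℝ)] fun Δ => Δ ^ 6 := hr
  have h2d : (fun Δ : ℝ => f (x + 2*Δ) - wzP f x (2*Δ)) =O[𝓝 (0:ℝ)] fun Δ => Δ ^ 6 := hcomp 2
  have hm1 : (fun Δ : ℝ => f (x - Δ) - wzP f x (-Δ)) =O[𝓝 (0:ℝ)] fun Δ => Δ ^ 6 := by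
    have := hcomp (-1)
    simpa [neg_one_mul, sub_eq_add_neg] using this
  have hm2 : (fun Δ : ℝ => f (x - 2*Δ) - wzP f x (-(2*Δ))) =O[𝓝 (0:ℝ)] fun Δ => Δ ^ 6 := by
    have := hcomp (-2)
    simpa [neg_mul, sub_eq_add_neg] using this
  -- continuity facts
  have hcf : ContinuousAt f x := hf.continuousAt
  have hcont : ∀ k : ℝ, ContinuousAt (fun Δ : ℝ => f (x + k * Δ)) 0 := by
    intro k
    have h1 : Filter.Tendsto (fun Δ : ℝ => x + k * Δ) (𝓝 0) (𝓝 x) := by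
      have hc : Continuous fun Δ : ℝ => x + k * Δ := by fun_prop
      simpa using hc.tendsto 0
    have h2 := Filter.Tendsto.comp hcf.tendsto h1
    simpa [ContinuousAt, Function.comp_def] using h2
  have hco1 : ContinuousAt (fun Δ : ℝ => f (x + Δ)) 0 := by
    have := hcont 1; simpa using this
  have hco2 : ContinuousAt (fun Δ : ℝ => f (x + 2*Δ)) 0 := hcont 2
  have hcom1 : ContinuousAt (fun Δ : ℝ => f (x - Δ)) 0 := by
    have := hcont (-1); simpa [neg_one_mul, sub_eq_add_neg] using this
  have hcom2 : ContinuousAt (fun Δ : ℝ => f (x - 2*Δ)) 0 := by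
    have := hcont (-2); simpa [neg_mul, sub_eq_add_neg] using this
  have hcp : Continuous (wzP f x) := by unfold wzP; fun_prop
  have hcp1 : ContinuousAt (fun Δ : ℝ => wzP f x Δ) 0 := hcp.continuousAt
  have hcp2 : ContinuousAt (fun Δ : ℝ => wzP f x (2*Δ)) 0 :=
    (hcp.comp (by fun_prop : Continuous fun Δ : ℝ => 2*Δ)).continuousAt
  have hcpm1 : ContinuousAt (fun Δ : ℝ => wzP f x (-Δ)) 0 :=
    (hcp.comp (by fun_prop : Continuous fun Δ : ℝ => -Δ)).continuousAt
  have hcpm2 : ContinuousAt (fun Δ : ℝ => wzP f x (-(2*Δ))) 0 :=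
    (hcp.comp (by fun_prop : Continuous fun Δ : ℝ => -(2*Δ))).continuousAt
  -- helper: O(Δ^6) times continuous is O(Δ^6)
  have hmul : ∀ {u v : ℝ → ℝ}, u =O[𝓝 (0:ℝ)] (fun Δ => Δ^6) → ContinuousAt v 0 →
      (fun Δ => u Δ * v Δ) =O[𝓝 (0:ℝ)] fun Δ => Δ^6 := by
    intro u v hu hv
    simpa using hu.mul ((hv : Filter.Tendsto v (𝓝 0) (𝓝 (v 0))).isBigO_one ℝ)
  -- the four error terms and the polynomial tail
  have hT0 : (fun Δ : ℝ => Δ^6 * ((13/12) * iteratedDeriv 2 f x * iteratedDeriv 5 f x * Δ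
      + (103/36) * iteratedDeriv 3 f x * iteratedDeriv 4 f x * Δ
      + (539/720) * iteratedDeriv 4 f x * iteratedDeriv 5 f x * Δ^3))
      =O[𝓝 (0:ℝ)] fun Δ => Δ^6 :=
    hmul (isBigO_refl _ _) (by fun_prop)
  have hE1 : (fun Δ : ℝ => (f (x + 2*Δ) - wzP f x (2*Δ)) - 2*(f (x + Δ) - wzP f x Δ))
      =O[𝓝 (0:ℝ)] fun Δ => Δ^6 := h2d.sub (h1d.const_mul_left 2)
  have hE2 : (fun Δ : ℝ => (f (x - 2*Δ) - wzP f x (-(2*Δ))) - 2*(f (x - Δ) - wzP f x (-Δ)))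
      =O[𝓝 (0:ℝ)] fun Δ => Δ^6 := hm2.sub (hm1.const_mul_left 2)
  have hE3 : (fun Δ : ℝ => (f (x + 2*Δ) - wzP f x (2*Δ)) - 4*(f (x + Δ) - wzP f x Δ))
      =O[𝓝 (0:ℝ)] fun Δ => Δ^6 := h2d.sub (h1d.const_mul_left 4)
  have hE4 : (fun Δ : ℝ => (f (x - 2*Δ) - wzP f x (-(2*Δ))) - 4*(f (x - Δ) - wzP f x (-Δ)))
      =O[𝓝 (0:ℝ)] fun Δ => Δ^6 := hm2.sub (hm1.const_mul_left 4)
  have hS1 : ContinuousAt (fun Δ : ℝ => (f x - 2 * f (x + Δ) + f (x + 2*Δ))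
      + (f x - 2 * wzP f x Δ + wzP f x (2*Δ))) 0 :=
    (((continuousAt_const.sub (continuousAt_const.mul hco1)).add hco2).add
      ((continuousAt_const.sub (continuousAt_const.mul hcp1)).add hcp2))
  have hS2 : ContinuousAt (fun Δ : ℝ => (f (x - 2*Δ) - 2 * f (x - Δ) + f x)
      + (wzP f x (-(2*Δ)) - 2 * wzP f x (-Δ) + f x)) 0 :=
    (((hcom2.sub (continuousAt_const.mul hcom1)).add continuousAt_const).add
      ((hcpm2.sub (continuousAt_const.mul hcpm1)).add continuousAt_const))
  have hS3 : ContinuousAt (fun Δ : ℝ => (3 * f x - 4 * f (x + Δ) + f (x + 2*Δ))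
      + (3 * f x - 4 * wzP f x Δ + wzP f x (2*Δ))) 0 :=
    (((continuousAt_const.sub (continuousAt_const.mul hco1)).add hco2).add
      ((continuousAt_const.sub (continuousAt_const.mul hcp1)).add hcp2))
  have hS4 : ContinuousAt (fun Δ : ℝ => (f (x - 2*Δ) - 4 * f (x - Δ) + 3 * f x)
      + (wzP f x (-(2*Δ)) - 4 * wzP f x (-Δ) + 3 * f x)) 0 :=
    (((hcom2.sub (continuousAt_const.mul hcom1)).add continuousAt_const).add
      ((hcpm2.sub (continuousAt_const.mul hcpm1)).add continuousAt_const))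
  have hT1 := (hmul hE1 hS1).const_mul_left (13/12)
  have hT2 := (hmul hE2 hS2).const_mul_left (13/12)
  have hT3 := (hmul hE3 hS3).const_mul_left (1/4)
  have hT4 := (hmul hE4 hS4).const_mul_left (1/4)
  have hkey : (fun Δ : ℝ =>
      (((13/12) * (f x - 2 * f (x + Δ) + f (x + 2*Δ))^2
          + (1/4) * (3 * f x - 4 * f (x + Δ) + f (x + 2*Δ))^2)
        - ((13/12) * (f (x - 2*Δ) - 2 * f (x - Δ) + f x)^2
          + (1/4) * (f (x - 2*Δ) - 4 * f (x - Δ) + 3 * f x)^2))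
      - ((13/3) * iteratedDeriv 2 f x * iteratedDeriv 3 f x
          - deriv f x * iteratedDeriv 4 f x) * Δ^5)
      =O[𝓝 (0:ℝ)] fun Δ => Δ^6 := by
    have hsum' := (((hT0.add hT1).sub hT2).add hT3).sub hT4
    have heq : (fun Δ : ℝ =>
        (((13/12) * (f x - 2 * f (x + Δ) + f (x + 2*Δ))^2
            + (1/4) * (3 * f x - 4 * f (x + Δ) + f (x + 2*Δ))^2)
          - ((13/12) * (f (x - 2*Δ) - 2 * f (x - Δ) + f x)^2
            + (1/4) * (f (x - 2*Δ) - 4 * f (x - Δ) + 3 * f x)^2))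
        - ((13/3) * iteratedDeriv 2 f x * iteratedDeriv 3 f x
            - deriv f x * iteratedDeriv 4 f x) * Δ^5)
      = fun Δ : ℝ =>
        Δ^6 * ((13/12) * iteratedDeriv 2 f x * iteratedDeriv 5 f x * Δ
          + (103/36) * iteratedDeriv 3 f x * iteratedDeriv 4 f x * Δ
          + (539/720) * iteratedDeriv 4 f x * iteratedDeriv 5 f x * Δ^3)
        + (13/12) * (((f (x + 2*Δ) - wzP f x (2*Δ)) - 2*(f (x + Δ) - wzP f x Δ))
            * ((f x - 2 * f (x + Δ) + f (x + 2*Δ)) + (f x - 2 * wzP f x Δ + wzP f x (2*Δ))))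
        - (13/12) * (((f (x - 2*Δ) - wzP f x (-(2*Δ))) - 2*(f (x - Δ) - wzP f x (-Δ)))
            * ((f (x - 2*Δ) - 2 * f (x - Δ) + f x) + (wzP f x (-(2*Δ)) - 2 * wzP f x (-Δ) + f x)))
        + (1/4) * (((f (x + 2*Δ) - wzP f x (2*Δ)) - 4*(f (x + Δ) - wzP f x Δ))
            * ((3 * f x - 4 * f (x + Δ) + f (x + 2*Δ)) + (3 * f x - 4 * wzP f x Δ + wzP f x (2*Δ))))
        - (1/4) * (((f (x - 2*Δ) - wzP f x (-(2*Δ))) - 4*(f (x - Δ) - wzP f x (-Δ)))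
            * ((f (x - 2*Δ) - 4 * f (x - Δ) + 3 * f x) + (wzP f x (-(2*Δ)) - 4 * wzP f x (-Δ) + 3 * f x))) := by
      funext Δ
      simp only [wzP]
      ring
    rw [heq]
    exact hsum'
  have hle : ∀ᶠ Δ in 𝓝[>] (0:ℝ),
      ‖|((13/12) * (f x - 2 * f (x + Δ) + f (x + 2*Δ))^2
            + (1/4) * (3 * f x - 4 * f (x + Δ) + f (x + 2*Δ))^2)
          - ((13/12) * (f (x - 2*Δ) - 2 * f (x - Δ) + f x)^2
            + (1/4) * (f (x - 2*Δ) - 4 * f (x - Δ) + 3 * f x)^2)|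
        - |(13/3) * iteratedDeriv 2 f x * iteratedDeriv 3 f x
            - deriv f x * iteratedDeriv 4 f x| * Δ^5‖
      ≤ 1 * ‖(((13/12) * (f x - 2 * f (x + Δ) + f (x + 2*Δ))^2
          + (1/4) * (3 * f x - 4 * f (x + Δ) + f (x + 2*Δ))^2)
        - ((13/12) * (f (x - 2*Δ) - 2 * f (x - Δ) + f x)^2
          + (1/4) * (f (x - 2*Δ) - 4 * f (x - Δ) + 3 * f x)^2))
      - ((13/3) * iteratedDeriv 2 f x * iteratedDeriv 3 f x
          - deriv f x * iteratedDeriv 4 f x) * Δ^5‖ := by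
    filter_upwards [self_mem_nhdsWithin] with Δ hΔ
    have hΔ' : (0:ℝ) < Δ := hΔ
    have h5 : |((13/3) * iteratedDeriv 2 f x * iteratedDeriv 3 f x
        - deriv f x * iteratedDeriv 4 f x) * Δ^5|
        = |(13/3) * iteratedDeriv 2 f x * iteratedDeriv 3 f x
            - deriv f x * iteratedDeriv 4 f x| * Δ^5 := by
      rw [abs_mul, abs_pow, abs_of_pos hΔ']
    rw [one_mul, Real.norm_eq_abs, Real.norm_eq_abs, ← h5]
    exact abs_abs_sub_abs_le_abs_sub _ _
  exact (IsBigO.of_bound 1 hle).trans (hkey.mono nhdsWithin_le_nhds)
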